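/- For every nonnegative integer n, \sum_{k=0}^{n} \binom{3k}{k}\binom{3(n-k)}{n-k} equals the coefficient of z^n in ((1+A_0(z))/(1-2A_0(z)))^2, where A_0 is the Fuss–Catalan generating series. -/

import Mathlib

open PowerSeries

def Aa (a k : ℕ) : ℚ := if k = 0 then 1 else (a : ℚ) / (a + 3*k) * (Nat.choose (a + 3*k) k)

lemma Aa_zero (a : ℕ) : Aa a 0 = 1 := rfl

lemma Aa_succ (a k : ℕ) : Aa a (k+1) = (a : ℚ) / ((a + 3*(k+1) : ℕ) : ℚ) * (Nat.choose (a + 3*(k+1)) (k+1)) := by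
  simp only [Aa, Nat.succ_ne_zero, if_false]
  push_cast
  ring

lemma Aa_pos (a k : ℕ) (ha : 0 < a) : Aa a k = (a : ℚ) / ((a + 3*k : ℕ) : ℚ) * (Nat.choose (a + 3*k) k) := by
  rcases k with _ | k
  · simp only [Aa_zero, Nat.mul_zero, Nat.add_zero, Nat.choose_self, Nat.cast_one, mul_one]
    rw [div_self (by exact_mod_cast ha.ne')]
    simp
  · exact Aa_succ a k

lemma aPascal (a k : ℕ) : Aa (a+1) (k+1) = Aa a (k+1) + Aa (a+3) k := by
  have hxy : ((a+3*k+3).choose (k+1) : ℚ) * (k+1) = ((a+3*k+3).choose k : ℚ) * (a+2*k+3) := by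
    have := Nat.choose_succ_right_eq (a+3*k+3) k
    have hs : a+3*k+3 - k = a+2*k+3 := by omega
    rw [hs] at this
    exact_mod_cast congrArg (Nat.cast (R := ℚ)) this
  have hz : ((a+3*k+4).choose (k+1) : ℚ) = ((a+3*k+3).choose k : ℚ) + ((a+3*k+3).choose (k+1) : ℚ) := by
    exact_mod_cast congrArg (Nat.cast (R := ℚ)) (Nat.choose_succ_succ (a+3*k+3) k)
  rw [Aa_succ, Aa_succ, Aa_pos (a+3) k (by omega)]
  have e1 : a+1+3*(k+1) = a+3*k+4 := by omega
  have e2 : a+3*(k+1) = a+3*k+3 := by omega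
  have e3 : a+3+3*k = a+3*k+3 := by omega
  rw [e1, e2, e3, hz]
  push_cast
  have d1 : (a:ℚ) + 3*k + 3 ≠ 0 := by positivity
  have d3 : (a:ℚ) + 3*k + 4 ≠ 0 := by positivity
  field_simp
  linear_combination (3:ℚ) * hxy

lemma rothe : ∀ n c a : ℕ,
    ∑ k ∈ Finset.range (n+1), Aa a k * ((c + 3*(n-k)).choose (n-k) : ℚ)
      = ((a + c + 3*n).choose n : ℚ) := by
  intro n
  induction n using Nat.strong_induction_on with
  | _ n ih =>
    rcases n with _ | m
    · intro c a
      simp [Aa_zero]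
    · intro c
      induction c with
      | zero =>
        intro a
        induction a with
        | zero =>
          rw [Finset.sum_range_succ']
          have h0 : ∀ j ∈ Finset.range (m+1), Aa 0 (j+1) * ((0 + 3*(m+1-(j+1))).choose (m+1-(j+1)) : ℚ) = 0 := by
            intro j hj
            rw [Aa_succ]
            simp
          rw [Finset.sum_congr rfl h0]
          simp [Aa_zero]
        | succ a iha =>
          rw [Finset.sum_range_succ']
          have hstep : ∀ j ∈ Finset.range (m+1),
              Aa (a+1) (j+1) * ((0 + 3*(m+1-(j+1))).choose (m+1-(j+1)) : ℚ)
              = Aa a (j+1) * ((0 + 3*(m+1-(j+1))).choose (m+1-(j+1)) : ℚ)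
                + Aa (a+3) j * ((0 + 3*(m-j)).choose (m-j) : ℚ) := by
            intro j hj
            have e : m+1-(j+1) = m - j := by omega
            rw [aPascal, add_mul, e]
          rw [Finset.sum_congr rfl hstep, Finset.sum_add_distrib]
          have h2 : ∑ j ∈ Finset.range (m+1), Aa (a+3) j * ((0 + 3*(m-j)).choose (m-j) : ℚ)
              = ((a+3 + 0 + 3*m).choose m : ℚ) := ih m (by omega) 0 (a+3)
          have h1 := iha
          rw [Finset.sum_range_succ'] at h1
          have hp : ((a+1+0+3*(m+1)).choose (m+1) : ℚ)
              = ((a+3+0+3*m).choose m : ℚ) + ((a+0+3*(m+1)).choose (m+1) : ℚ) := by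
            have h := Nat.choose_succ_succ (a+3*m+3) m
            have e1 : a+1+0+3*(m+1) = a+3*m+3+1 := by omega
            have e2 : a+3+0+3*m = a+3*m+3 := by omega
            have e3 : a+0+3*(m+1) = a+3*m+3 := by omega
            rw [e1, e2, e3]
            exact_mod_cast congrArg (Nat.cast (R := ℚ)) h
          rw [Aa_zero] at h1 ⊢
          linarith [h1, h2, hp]
      | succ c ihc =>
        intro a
        rw [Finset.sum_range_succ]
        have hstep : ∀ k ∈ Finset.range (m+1),
            Aa a k * ((c+1 + 3*(m+1-k)).choose (m+1-k) : ℚ)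
            = Aa a k * ((c + 3*(m+1-k)).choose (m+1-k) : ℚ)
              + Aa a k * ((c+3 + 3*(m-k)).choose (m-k) : ℚ) := by
          intro k hk
          rw [← mul_add]
          congr 1
          have hk' : k ≤ m := Nat.lt_succ_iff.mp (Finset.mem_range.mp hk)
          have hq : (c+1+3*(m+1-k)).choose (m+1-k)
              = (c+3*(m+1-k)).choose (m+1-k) + (c+3+3*(m-k)).choose (m-k) := by
            have h := Nat.choose_succ_succ (c + 3*(m-k) + 3) (m-k)
            have e1 : c+1+3*(m+1-k) = c+3*(m-k)+3+1 := by omega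
            have e2 : c+3+3*(m-k) = c+3*(m-k)+3 := by omega
            have e3 : m+1-k = m-k+1 := by omega
            have e4 : c+3*(m+1-k) = c+3*(m-k)+3 := by omega
            rw [e1, e2, e4, e3, Nat.choose_succ_succ, Nat.add_comm]
          rw [hq]
          push_cast
          ring
        rw [Finset.sum_congr rfl hstep, Finset.sum_add_distrib]
        have h2 : ∑ k ∈ Finset.range (m+1), Aa a k * ((c+3 + 3*(m-k)).choose (m-k) : ℚ)
            = ((a + (c+3) + 3*m).choose m : ℚ) := ih m (by omega) (c+3) a
        have h1 := ihc a
        rw [Finset.sum_range_succ] at h1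
        have hp : ((a+(c+1)+3*(m+1)).choose (m+1) : ℚ)
            = ((a+(c+3)+3*m).choose m : ℚ) + ((a+c+3*(m+1)).choose (m+1) : ℚ) := by
          have h := Nat.choose_succ_succ (a+c+3*m+3) m
          have e1 : a+(c+1)+3*(m+1) = a+c+3*m+3+1 := by omega
          have e2 : a+(c+3)+3*m = a+c+3*m+3 := by omega
          have e3 : a+c+3*(m+1) = a+c+3*m+3 := by omega
          rw [e1, e2, e3]
          exact_mod_cast congrArg (Nat.cast (R := ℚ)) h
        simp only [Nat.sub_self, Nat.mul_zero, Nat.add_zero, Nat.choose_zero_right,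
          Nat.cast_one, mul_one] at h1 ⊢
        linarith [h1, h2, hp]

/-- `(2k+1) * C(3k+1, k) = (3k+1) * C(3k, k)` in `ℚ`. -/
lemma key_choose (k : ℕ) :
    (2*(k:ℚ)+1) * ((3*k+1).choose k : ℚ) = (3*(k:ℚ)+1) * ((3*k).choose k : ℚ) := by
  rcases k with _ | j
  · norm_num
  · have hxy : ((3*j+3).choose (j+1) : ℚ) * (j+1) = ((3*j+3).choose j : ℚ) * (2*j+3) := by
      have h := Nat.choose_succ_right_eq (3*j+3) j
      have hs : 3*j+3 - j = 2*j+3 := by omega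
      rw [hs] at h
      exact_mod_cast congrArg (Nat.cast (R := ℚ)) h
    have hz : ((3*j+4).choose (j+1) : ℚ) = ((3*j+3).choose j : ℚ) + ((3*j+3).choose (j+1) : ℚ) := by
      exact_mod_cast congrArg (Nat.cast (R := ℚ)) (Nat.choose_succ_succ (3*j+3) j)
    have e1 : 3*(j+1)+1 = 3*j+4 := by omega
    have e2 : 3*(j+1) = 3*j+3 := by omega
    rw [e1, e2, hz]
    push_cast
    linear_combination -hxy

lemma Aa_one (k : ℕ) : Aa 1 k = ((3*k).choose k : ℚ) / (2*k+1) := by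
  rcases k with _ | j
  · rw [Aa_zero]; norm_num
  · rw [Aa_succ]
    have h := key_choose (j+1)
    have e1 : 1 + 3*(j+1) = 3*j+4 := by omega
    have e2 : 3*(j+1)+1 = 3*j+4 := by omega
    have e3 : 3*(j+1) = 3*j+3 := by omega
    rw [e1, e3]
    rw [e2, e3] at h
    push_cast at h ⊢
    have d1 : (3*(j:ℚ)+4) ≠ 0 := by positivity
    have d2 : (2*(j:ℚ)+3) ≠ 0 := by positivity
    field_simp
    linear_combination h

/-- The Rothe identity specialized: `∑ u_k c_{n-k} = C(3n+1, n)`. -/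
lemma rothe1 (n : ℕ) :
    ∑ k ∈ Finset.range (n+1), (((3*k).choose k : ℚ) / (2*k+1)) * ((3*(n-k)).choose (n-k) : ℚ)
      = ((3*n+1).choose n : ℚ) := by
  have h := rothe n 0 1
  have e : ∀ k ∈ Finset.range (n+1),
      Aa 1 k * ((0 + 3*(n-k)).choose (n-k) : ℚ)
      = (((3*k).choose k : ℚ) / (2*k+1)) * ((3*(n-k)).choose (n-k) : ℚ) := by
    intro k hk
    rw [Aa_one, Nat.zero_add]
  rw [Finset.sum_congr rfl e] at h
  have e2 : 1+0+3*n = 3*n+1 := by omega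
  rw [e2] at h
  exact h

lemma conv_comm (f g : ℕ → ℚ) (n : ℕ) :
    ∑ k ∈ Finset.range (n+1), f k * g (n-k) = ∑ k ∈ Finset.range (n+1), g k * f (n-k) := by
  rw [← Finset.sum_range_reflect]
  apply Finset.sum_congr rfl
  intro k hk
  have hk' : k ≤ n := Nat.lt_succ_iff.mp (Finset.mem_range.mp hk)
  have e1 : n + 1 - 1 - k = n - k := by omega
  have e2 : n - (n - k) = k := by omega
  rw [e1, e2, mul_comm]

/-- For every `n`, `∑_{k=0}^{n} binom(3k,k) binom(3(n-k), n-k)` is the coefficient of `z^n`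
in `((1+A₀(z))/(1-2A₀(z)))^2`, where `A₀` is the Fuss–Catalan generating series. -/
theorem stmt_4
    (A₀ : PowerSeries ℚ)
    (hA₀ : A₀ = PowerSeries.mk fun n =>
      if n = 0 then 0 else (Nat.choose (3 * n) n : ℚ) / (2 * n + 1)) :
    ∀ n : ℕ,
      (∑ k ∈ Finset.range (n + 1),
          (Nat.choose (3 * k) k : ℚ) * (Nat.choose (3 * (n - k)) (n - k) : ℚ)) =
        coeff n (((1 + A₀) * (1 - 2 * A₀)⁻¹) ^ 2) := by
  set Cs : PowerSeries ℚ := PowerSeries.mk fun k => ((3*k).choose k : ℚ) with hCs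
  have hd : ∀ j, coeff j (1 - 2*A₀)
      = (if j = 0 then 1 else -2 * (((3*j).choose j : ℚ) / (2*j+1))) := by
    intro j
    rw [map_sub, hA₀]
    rw [show (2 : PowerSeries ℚ) = C 2 from (map_ofNat C 2).symm, coeff_C_mul, coeff_mk]
    rcases j with _ | i
    · simp
    · simp [coeff_one]
  have hconst : constantCoeff (1 - 2*A₀) ≠ 0 := by
    have := hd 0
    rw [← coeff_zero_eq_constantCoeff_apply, this]
    norm_num
  have hmul : 1 + A₀ = Cs * (1 - 2*A₀) := by
    ext n
    rw [coeff_mul, Finset.Nat.sum_antidiagonal_eq_sum_range_succ_mk]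
    have hcs : ∀ p : ℕ, coeff p Cs = ((3*p).choose p : ℚ) := fun p => coeff_mk p _
    rcases n with _ | m
    · simp [hd, hA₀, hcs, coeff_one]
    · set n := m + 1 with hn
      have hL : coeff n (1 + A₀) = ((3*n).choose n : ℚ) / (2*n+1) := by
        rw [map_add, hA₀, coeff_mk, coeff_one]
        simp [hn]
      rw [hL]
      have hswap : ∑ k ∈ Finset.range (n+1), coeff k Cs * coeff (n-k) (1 - 2*A₀)
          = ∑ k ∈ Finset.range (n+1), coeff k (1 - 2*A₀) * coeff (n-k) Cs :=
        conv_comm (fun k => coeff k Cs) (fun k => coeff k (1 - 2*A₀)) n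
      rw [hswap, Finset.sum_range_succ']
      have hz : coeff 0 (1 - 2*A₀) * coeff (n - 0) Cs = ((3*n).choose n : ℚ) := by
        rw [hd, hcs]; norm_num
      have hrest : ∑ i ∈ Finset.range n, coeff (i+1) (1 - 2*A₀) * coeff (n-(i+1)) Cs
          = -2 * (∑ i ∈ Finset.range n,
              (((3*(i+1)).choose (i+1) : ℚ) / (2*((i+1 : ℕ) : ℚ)+1)) * ((3*(n-(i+1))).choose (n-(i+1)) : ℚ)) := by
        rw [Finset.mul_sum]
        apply Finset.sum_congr rfl
        intro i hi
        rw [hd, hcs]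
        simp only [Nat.succ_ne_zero, if_false]
        ring
      have hro : ∑ i ∈ Finset.range n,
            (((3*(i+1)).choose (i+1) : ℚ) / (2*((i+1 : ℕ) : ℚ)+1)) * ((3*(n-(i+1))).choose (n-(i+1)) : ℚ)
          = ((3*n+1).choose n : ℚ) - ((3*n).choose n : ℚ) := by
        have h := rothe1 n
        rw [Finset.sum_range_succ'] at h
        have h0 : (((3*0).choose 0 : ℚ) / (2*((0 : ℕ) : ℚ)+1)) * ((3*(n-0)).choose (n-0) : ℚ)
            = ((3*n).choose n : ℚ) := by norm_num
        rw [h0] at h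
        linarith
      rw [hz, hrest, hro]
      have hk := key_choose n
      have d2 : (2*(n:ℚ)+1) ≠ 0 := by positivity
      field_simp
      linear_combination (2:ℚ) * hk
  have hinv : (1 + A₀) * (1 - 2*A₀)⁻¹ = Cs := by
    rw [hmul, mul_assoc, PowerSeries.mul_inv_cancel _ hconst, mul_one]
  intro n
  rw [show (1 - 2 * A₀ : PowerSeries ℚ) = 1 - 2*A₀ from rfl] at *
  rw [hinv, sq, coeff_mul, Finset.Nat.sum_antidiagonal_eq_sum_range_succ_mk]
  apply Finset.sum_congr rfl
  intro k hk
  rw [hCs]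
  simp [coeff_mk]
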